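/- For every γ > 0 and all real δx, δy, δz, the function t ↦ (1/2)√(e^{-γt}(δx² + δy²) + e^{-2γt} δz²) is antitone (nonincreasing) on [0,∞). Consequently, under the generalized amplitude damping dynamics the trace distance between any two evolved states never increases, for all γ > 0 and all f: the dynamics is BLP Markovian. -/

import Mathlib

noncomputable section

/-- The action of a qubit dynamical map, given by a real 3×3 matrix,
on Bloch vectors in ℝ³. -/
def act (T : Matrix (Fin 3) (Fin 3) ℝ) (r : EuclideanSpace ℝ (Fin 3)) :
    EuclideanSpace ℝ (Fin 3) :=
  WithLp.toLp 2 (T.mulVec r)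

/-- The matrix part T(t) = diag(√η, √η, η), η = e^{-γt}, of the generalized
amplitude damping dynamics. -/
def Tgad (γ t : ℝ) : Matrix (Fin 3) (Fin 3) ℝ :=
  Matrix.diagonal ![Real.sqrt (Real.exp (-γ * t)), Real.sqrt (Real.exp (-γ * t)),
    Real.exp (-γ * t)]

/-- The translation part c(t) = (0, 0, (2s-1)(1-η)), s = cos²(ft), η = e^{-γt}, of the
generalized amplitude damping dynamics. -/
def cgad (γ f t : ℝ) : EuclideanSpace ℝ (Fin 3) :=
  WithLp.toLp 2 ![0, 0, (2 * Real.cos (f * t) ^ 2 - 1) * (1 - Real.exp (-γ * t))]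

/-- For every γ > 0 and all real δx, δy, δz, the function
t ↦ (1/2)√(e^{-γt}(δx² + δy²) + e^{-2γt}δz²) is antitone on [0,∞); consequently, under
the generalized amplitude damping dynamics the trace distance between any two evolved
states never increases, for all γ > 0 and all f: the dynamics is BLP Markovian. -/
theorem gad_is_blp_markovian (γ : ℝ) (hγ : 0 < γ) :
    (∀ δx δy δz : ℝ,
      AntitoneOn (fun t : ℝ => (1 / 2 : ℝ) *
        Real.sqrt (Real.exp (-γ * t) * (δx ^ 2 + δy ^ 2)
          + Real.exp (-2 * γ * t) * δz ^ 2)) (Set.Ici 0))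
    ∧ ∀ (f : ℝ) (r₁ r₂ : EuclideanSpace ℝ (Fin 3)), ‖r₁‖ ≤ 1 → ‖r₂‖ ≤ 1 →
      AntitoneOn (fun t : ℝ => (1 / 2 : ℝ) *
        ‖(act (Tgad γ t) r₁ + cgad γ f t) - (act (Tgad γ t) r₂ + cgad γ f t)‖)
        (Set.Ici 0) := by
  have key : ∀ δx δy δz : ℝ,
      AntitoneOn (fun t : ℝ => (1 / 2 : ℝ) *
        Real.sqrt (Real.exp (-γ * t) * (δx ^ 2 + δy ^ 2)
          + Real.exp (-2 * γ * t) * δz ^ 2)) (Set.Ici 0) := by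
    intro δx δy δz a _ b _ hab
    have h1 : Real.exp (-γ * b) ≤ Real.exp (-γ * a) := by
      apply Real.exp_le_exp.2; nlinarith
    have h2 : Real.exp (-2 * γ * b) ≤ Real.exp (-2 * γ * a) := by
      apply Real.exp_le_exp.2; nlinarith
    have hxy : (0:ℝ) ≤ δx ^ 2 + δy ^ 2 := by positivity
    have hz : (0:ℝ) ≤ δz ^ 2 := by positivity
    refine mul_le_mul_of_nonneg_left ?_ (by norm_num)
    apply Real.sqrt_le_sqrt
    gcongr
  refine ⟨key, fun f r₁ r₂ _ _ => ?_⟩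
  have heq : ∀ t : ℝ,
      ‖(act (Tgad γ t) r₁ + cgad γ f t) - (act (Tgad γ t) r₂ + cgad γ f t)‖
        = Real.sqrt (Real.exp (-γ * t) * ((r₁ 0 - r₂ 0) ^ 2 + (r₁ 1 - r₂ 1) ^ 2)
            + Real.exp (-2 * γ * t) * (r₁ 2 - r₂ 2) ^ 2) := by
    intro t
    have h1 : (act (Tgad γ t) r₁ + cgad γ f t) - (act (Tgad γ t) r₂ + cgad γ f t)
        = act (Tgad γ t) r₁ - act (Tgad γ t) r₂ := by abel
    rw [h1, EuclideanSpace.norm_eq]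
    congr 1
    have hs : Real.sqrt (Real.exp (-γ * t)) ^ 2 = Real.exp (-γ * t) :=
      Real.sq_sqrt (Real.exp_pos _).le
    have he2 : Real.exp (-2 * γ * t) = Real.exp (-γ * t) * Real.exp (-γ * t) := by
      rw [← Real.exp_add]; ring_nf
    simp only [act, Tgad, Fin.sum_univ_three, PiLp.sub_apply, Matrix.mulVec_diagonal,
      Real.norm_eq_abs, sq_abs]
    simp only [Matrix.cons_val_zero, Matrix.cons_val_one, Matrix.head_cons,
      Matrix.cons_val_two, Matrix.tail_cons]
    rw [he2]
    nlinarith [hs, sq_nonneg (r₁ 0 - r₂ 0)]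
  intro a ha b hb hab
  simp only [heq]
  exact key (r₁ 0 - r₂ 0) (r₁ 1 - r₂ 1) (r₁ 2 - r₂ 2) ha hb hab
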